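/- Let S be a real symmetric positive definite 2N×2N matrix. Then det S = det Ṡ · det(I_{2N} + Γ(S)), and moreover det(I_{2N} + Γ(S)) = det(I_{2N} − Γ(S)), so that det S = det Ṡ · √(det(I_{2N} − Γ(S)²)). -/

import Mathlib

open Matrix Polynomial

/-- The proper part `Ċ` of a real `2N × 2N` matrix `C` with blocks `[[A, B],[B′, D]]`:
`Ċ = (1/2)·[[A+D, B−B′],[B′−B, A+D]]`. -/
noncomputable def dotPart {N : ℕ} (C : Matrix (Fin N ⊕ Fin N) (Fin N ⊕ Fin N) ℝ) :
    Matrix (Fin N ⊕ Fin N) (Fin N ⊕ Fin N) ℝ :=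
  (1/2 : ℝ) • Matrix.fromBlocks (C.toBlocks₁₁ + C.toBlocks₂₂) (C.toBlocks₁₂ - C.toBlocks₂₁)
    (C.toBlocks₂₁ - C.toBlocks₁₂) (C.toBlocks₁₁ + C.toBlocks₂₂)

/-- The improper part `C̈ = C − Ċ`. -/
noncomputable def ddotPart {N : ℕ} (C : Matrix (Fin N ⊕ Fin N) (Fin N ⊕ Fin N) ℝ) :
    Matrix (Fin N ⊕ Fin N) (Fin N ⊕ Fin N) ℝ :=
  C - dotPart C

/-- `Γ(C) = Ċ^{-1/2} C̈ Ċ^{-1/2}`, where `Ċ^{1/2}` is the (unique) positive semidefinite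
(hence, as `Ċ` is positive definite, the unique symmetric positive definite) square root
of `Ċ`, given a proof `h` that `Ċ` is positive definite. -/
noncomputable def Gamma {N : ℕ} (C : Matrix (Fin N ⊕ Fin N) (Fin N ⊕ Fin N) ℝ)
    (h : (dotPart C).PosDef) : Matrix (Fin N ⊕ Fin N) (Fin N ⊕ Fin N) ℝ :=
  ((h.posSemidef.1.eigenvectorUnitary : Matrix (Fin N ⊕ Fin N) (Fin N ⊕ Fin N) ℝ) *
      diagonal ((↑) ∘ (Real.sqrt ·) ∘ h.posSemidef.1.eigenvalues) *
      (star (h.posSemidef.1.eigenvectorUnitary : Matrix (Fin N ⊕ Fin N) (Fin N ⊕ Fin N) ℝ)))⁻¹ *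
    ddotPart C *
    ((h.posSemidef.1.eigenvectorUnitary : Matrix (Fin N ⊕ Fin N) (Fin N ⊕ Fin N) ℝ) *
      diagonal ((↑) ∘ (Real.sqrt ·) ∘ h.posSemidef.1.eigenvalues) *
      (star (h.posSemidef.1.eigenvectorUnitary : Matrix (Fin N ⊕ Fin N) (Fin N ⊕ Fin N) ℝ)))⁻¹

/-- The complex structure `J = [[0, -1],[1, 0]]`. -/
def Jmat (N : ℕ) : Matrix (Fin N ⊕ Fin N) (Fin N ⊕ Fin N) ℝ :=
  Matrix.fromBlocks 0 (-1) 1 0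

lemma Jmat_mul_transpose (N : ℕ) : Jmat N * (Jmat N)ᵀ = 1 := by
  simp [Jmat, Matrix.fromBlocks_transpose, Matrix.fromBlocks_multiply,
    ← Matrix.fromBlocks_one]

lemma transpose_mul_Jmat (N : ℕ) : (Jmat N)ᵀ * Jmat N = 1 :=
  mul_eq_one_comm.mp (Jmat_mul_transpose N)

lemma Jmat_comm_dot {N : ℕ} (S : Matrix (Fin N ⊕ Fin N) (Fin N ⊕ Fin N) ℝ) :
    Jmat N * dotPart S = dotPart S * Jmat N := by
  simp only [dotPart, Jmat, Matrix.mul_smul, Matrix.smul_mul,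
    Matrix.fromBlocks_multiply, Matrix.zero_mul, Matrix.mul_zero, Matrix.one_mul,
    Matrix.mul_one, Matrix.neg_mul, Matrix.mul_neg, Matrix.fromBlocks_inj]
  refine congrArg _ (Matrix.ext_iff_blocks.mpr ⟨?_, ?_, ?_, ?_⟩) <;>
    simp only [Matrix.toBlocks_fromBlocks₁₁, Matrix.toBlocks_fromBlocks₁₂,
      Matrix.toBlocks_fromBlocks₂₁, Matrix.toBlocks_fromBlocks₂₂] <;> module

lemma fromBlocks_sub' {N : ℕ} (A B C D A' B' C' D' : Matrix (Fin N) (Fin N) ℝ) :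
    Matrix.fromBlocks A B C D - Matrix.fromBlocks A' B' C' D'
      = Matrix.fromBlocks (A - A') (B - B') (C - C') (D - D') := by
  simp only [sub_eq_add_neg, Matrix.fromBlocks_neg, Matrix.fromBlocks_add]

lemma ddot_fromBlocks {N : ℕ} (A B B' D : Matrix (Fin N) (Fin N) ℝ) :
    ddotPart (Matrix.fromBlocks A B B' D)
      = Matrix.fromBlocks ((1/2 : ℝ) • (A - D)) ((1/2 : ℝ) • (B + B'))
          ((1/2 : ℝ) • (B + B')) (-((1/2 : ℝ) • (A - D))) := by
  rw [ddotPart, dotPart]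
  simp only [Matrix.toBlocks_fromBlocks₁₁, Matrix.toBlocks_fromBlocks₁₂,
    Matrix.toBlocks_fromBlocks₂₁, Matrix.toBlocks_fromBlocks₂₂,
    Matrix.fromBlocks_smul, fromBlocks_sub']
  refine Matrix.ext_iff_blocks.mpr ⟨?_, ?_, ?_, ?_⟩ <;>
    simp only [Matrix.toBlocks_fromBlocks₁₁, Matrix.toBlocks_fromBlocks₁₂,
      Matrix.toBlocks_fromBlocks₂₁, Matrix.toBlocks_fromBlocks₂₂] <;> module

lemma Jmat_anticomm_form {N : ℕ} (X Y : Matrix (Fin N) (Fin N) ℝ) :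
    Jmat N * Matrix.fromBlocks X Y Y (-X) = -(Matrix.fromBlocks X Y Y (-X) * Jmat N) := by
  simp only [Jmat, Matrix.fromBlocks_multiply, Matrix.fromBlocks_neg,
    Matrix.zero_mul, Matrix.mul_zero, Matrix.one_mul, Matrix.mul_one,
    Matrix.neg_mul, Matrix.mul_neg, neg_neg]
  refine Matrix.ext_iff_blocks.mpr ⟨?_, ?_, ?_, ?_⟩ <;>
    simp only [Matrix.toBlocks_fromBlocks₁₁, Matrix.toBlocks_fromBlocks₁₂,
      Matrix.toBlocks_fromBlocks₂₁, Matrix.toBlocks_fromBlocks₂₂] <;> module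

lemma Jmat_anticomm_ddot {N : ℕ} (S : Matrix (Fin N ⊕ Fin N) (Fin N ⊕ Fin N) ℝ) :
    Jmat N * ddotPart S = -(ddotPart S * Jmat N) := by
  have h : ddotPart S = ddotPart (Matrix.fromBlocks S.toBlocks₁₁ S.toBlocks₁₂
      S.toBlocks₂₁ S.toBlocks₂₂) := by rw [Matrix.fromBlocks_toBlocks]
  rw [h, ddot_fromBlocks]
  exact Jmat_anticomm_form _ _

lemma Jmat_transpose (N : ℕ) : (Jmat N)ᵀ = -(Jmat N) := by
  simp [Jmat, Matrix.fromBlocks_transpose, Matrix.fromBlocks_neg]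

lemma Jmat_mul_Jmat (N : ℕ) : Jmat N * Jmat N = -1 := by
  have h := Jmat_mul_transpose N
  rw [Jmat_transpose, Matrix.mul_neg] at h
  exact neg_eq_iff_eq_neg.mp h

theorem statement8 (N : ℕ) (hN : 1 ≤ N) (S : Matrix (Fin N ⊕ Fin N) (Fin N ⊕ Fin N) ℝ)
    (hS : S.PosDef) (hd : (dotPart S).PosDef) :
    S.det = (dotPart S).det * (1 + Gamma S hd).det ∧
    (1 + Gamma S hd).det = (1 - Gamma S hd).det ∧
    S.det = (dotPart S).det * Real.sqrt (1 - Gamma S hd ^ 2).det := by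
  set R := ((hd.posSemidef.1.eigenvectorUnitary : Matrix (Fin N ⊕ Fin N) (Fin N ⊕ Fin N) ℝ) *
      diagonal ((↑) ∘ (Real.sqrt ·) ∘ hd.posSemidef.1.eigenvalues) *
      (star (hd.posSemidef.1.eigenvectorUnitary : Matrix (Fin N ⊕ Fin N) (Fin N ⊕ Fin N) ℝ)))
    with hRdef
  set J := Jmat N with hJdef
  open scoped MatrixOrder in
  have hRsq : R = CFC.sqrt (dotPart S) := by
    rw [CFC.sqrt_eq_real_sqrt _ hd.posSemidef.nonneg, cfcₙ_eq_cfc, hd.posSemidef.1.cfc_eq,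
      IsHermitian.cfc, Unitary.conjStarAlgAut_apply]
    rfl
  open scoped MatrixOrder in
  have hRps : R.PosSemidef := hRsq ▸ (CFC.sqrt_nonneg (dotPart S)).posSemidef
  open scoped MatrixOrder in
  have hRR : R * R = dotPart S := hRsq ▸ CFC.sqrt_mul_sqrt_self _ hd.posSemidef.nonneg
  have hdetdot : 0 < (dotPart S).det := hd.det_pos
  have hdetS : 0 < S.det := hS.det_pos
  have hdetR : R.det ≠ 0 := by
    intro h
    rw [← hRR, Matrix.det_mul, h, mul_zero] at hdetdot
    exact lt_irrefl _ hdetdot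
  have hRunit : IsUnit R.det := isUnit_iff_ne_zero.mpr hdetR
  have hRinv : R * R⁻¹ = 1 := Matrix.mul_nonsing_inv R hRunit
  have hRinv' : R⁻¹ * R = 1 := Matrix.nonsing_inv_mul R hRunit
  have hJJT : J * Jᵀ = 1 := Jmat_mul_transpose N
  have hTJJ : Jᵀ * J = 1 := transpose_mul_Jmat N
  have hJdot : J * dotPart S = dotPart S * J := Jmat_comm_dot S
  have hJdd : J * ddotPart S = -(ddotPart S * J) := Jmat_anticomm_ddot S
  have hJJ : J * J = -1 := Jmat_mul_Jmat N
  -- J commutes with R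
  have hJRJ : J * R * Jᵀ = R := by
    have hM : (J * R * Jᵀ).PosSemidef := by
      have := hRps.mul_mul_conjTranspose_same J
      rwa [Matrix.conjTranspose_eq_transpose_of_trivial] at this
    have hsq : (J * R * Jᵀ) ^ 2 = dotPart S := by
      calc (J * R * Jᵀ) ^ 2 = J * R * (Jᵀ * J) * R * Jᵀ := by
              rw [pow_two]; simp only [Matrix.mul_assoc]
        _ = J * (R * R) * Jᵀ := by rw [hTJJ, Matrix.mul_one]; simp only [Matrix.mul_assoc]
        _ = dotPart S * (J * Jᵀ) := by rw [hRR, ← Matrix.mul_assoc, hJdot, Matrix.mul_assoc]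
        _ = dotPart S := by rw [hJJT, Matrix.mul_one]
    open scoped MatrixOrder in
    exact (hRsq.trans (CFC.sqrt_unique (by rw [← pow_two]; exact hsq) hM.nonneg)).symm
  have hJR : J * R = R * J := by
    calc J * R = J * R * (Jᵀ * J) := by rw [hTJJ, Matrix.mul_one]
      _ = (J * R * Jᵀ) * J := by simp only [Matrix.mul_assoc]
      _ = R * J := by rw [hJRJ]
  have hJRi : J * R⁻¹ = R⁻¹ * J := by
    calc J * R⁻¹ = R⁻¹ * R * (J * R⁻¹) := by rw [hRinv', Matrix.one_mul]
      _ = R⁻¹ * (R * J) * R⁻¹ := by simp only [Matrix.mul_assoc]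
      _ = R⁻¹ * (J * R) * R⁻¹ := by rw [hJR]
      _ = R⁻¹ * J * (R * R⁻¹) := by simp only [Matrix.mul_assoc]
      _ = R⁻¹ * J := by rw [hRinv, Matrix.mul_one]
  set G := Gamma S hd with hGdef
  -- J conjugation fixes Gamma (since Jᵀ = -J and J Γ Jᵀ = -Γ)
  have hJG : J * G * J = G := by
    have e1 : J * G * J = J * R⁻¹ * ddotPart S * R⁻¹ * J := by
      rw [hGdef, Gamma, ← hRdef]; simp only [Matrix.mul_assoc]
    rw [e1, hJRi, Matrix.mul_assoc R⁻¹ J (ddotPart S), hJdd, Matrix.mul_neg,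
      Matrix.neg_mul, Matrix.neg_mul]
    have e2 : R⁻¹ * (ddotPart S * J) * R⁻¹ * J = R⁻¹ * ddotPart S * (J * R⁻¹ * J) := by
      simp only [Matrix.mul_assoc]
    rw [e2, hJRi, Matrix.mul_assoc R⁻¹ J J, hJJ, Matrix.mul_neg, Matrix.mul_one,
      Matrix.mul_neg, neg_neg]
    rfl
  -- Part 1 : S = R * (1 + G) * R
  have hfact : S = R * (1 + G) * R := by
    have h1 : R * G * R = ddotPart S := by
      calc R * G * R = (R * R⁻¹) * ddotPart S * (R⁻¹ * R) := by
            rw [hGdef, Gamma, ← hRdef]; simp only [Matrix.mul_assoc]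
        _ = ddotPart S := by rw [hRinv, hRinv', Matrix.one_mul, Matrix.mul_one]
    calc S = dotPart S + ddotPart S := by rw [ddotPart]; abel
      _ = R * R + R * G * R := by rw [hRR, h1]
      _ = R * (1 + G) * R := by
          rw [Matrix.mul_add, Matrix.mul_one, Matrix.add_mul]
  have part1 : S.det = (dotPart S).det * (1 + G).det := by
    have h := congrArg Matrix.det hfact
    rw [Matrix.det_mul, Matrix.det_mul] at h
    rw [h, ← hRR, Matrix.det_mul R R]
    ring
  -- Part 2
  have part2 : (1 + G).det = (1 - G).det := by
    have h2 : J * (1 + G) * J = -(1 - G) := by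
      rw [Matrix.mul_add, Matrix.mul_one, Matrix.add_mul, hJJ, hJG]
      abel
    have h3 : (J * (1 + G) * J).det = (-(1 - G)).det := by rw [h2]
    rw [Matrix.det_mul, Matrix.det_mul, Matrix.det_neg, Fintype.card_sum, Fintype.card_fin] at h3
    have hJJdet : J.det * J.det = (-1 : ℝ) ^ (N + N) := by
      rw [← Matrix.det_mul, hJJ]
      rw [show (-1 : Matrix (Fin N ⊕ Fin N) (Fin N ⊕ Fin N) ℝ) = -(1) from rfl,
        Matrix.det_neg, Fintype.card_sum, Fintype.card_fin, Matrix.det_one, mul_one]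
    have hsign : ((-1 : ℝ) ^ (N + N)) ≠ 0 := by positivity
    have h4 : (-1 : ℝ) ^ (N + N) * (1 + G).det = (-1 : ℝ) ^ (N + N) * (1 - G).det := by
      calc (-1 : ℝ) ^ (N + N) * (1 + G).det = J.det * (1 + G).det * J.det := by
            rw [mul_right_comm, hJJdet]
        _ = (-1 : ℝ) ^ (N + N) * (1 - G).det := h3
    exact mul_left_cancel₀ hsign h4
  -- Part 3
  have hone : 0 < (1 + G).det := by
    have h := hdetS
    rw [part1] at h
    nlinarith [h, hdetdot]
  have part3 : S.det = (dotPart S).det * Real.sqrt (1 - G ^ 2).det := by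
    have hmul : (1 - G ^ 2) = (1 + G) * (1 - G) := by noncomm_ring
    rw [hmul, Matrix.det_mul, ← part2, Real.sqrt_mul_self hone.le]
    exact part1
  exact ⟨part1, part2, part3⟩
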